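/- Let S_1, …, S_h (h ≥ 2) be nonempty finite sets of nonempty strings over Σ. For 1 ≤ k ≤ h and characters a, b ∈ Σ, define M[k,a,b] ∈ ℕ∞ (extended naturals) as the infimum of runs(y_1 y_2 ⋯ y_k) over all choices y_t ∈ S_t for 1 ≤ t ≤ k such that y_1 starts with a and y_k ends with b (with M[k,a,b] = ⊤ if no such choice exists), and define ρ_k(d,b) ∈ ℕ∞ as the infimum of runs(y) over all y ∈ S_k starting with d and ending with b. Then for every k with 2 ≤ k ≤ h and all a, b ∈ Σ: M[k,a,b] = min over c, d ∈ Σ of ( M[k−1,a,c] + ρ_k(d,b) − δ_{cd} ), where δ_{cd} = 1 if c = d and δ_{cd} = 0 otherwise (subtraction is truncated subtraction in ℕ∞). -/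

import Mathlib

/-- The number of maximal runs of equal consecutive symbols in a string:
the number of positions `i` such that `i = 1` or `z[i] ≠ z[i−1]`. -/
def runs {α : Type*} [DecidableEq α] : List α → ℕ
  | [] => 0
  | [_] => 1
  | a :: b :: l => (if a = b then 0 else 1) + runs (b :: l)

/-- `M[k,a,b]`: the infimum in `ℕ∞` of `runs (y₁ ⋯ y_k)` over all choices
`y_t ∈ S t` (`t = 0, …, k−1`, 0-based) such that `y₁` starts with `a` and
`y_k` ends with `b` (`⊤` if no such choice exists). -/
noncomputable def chainRuns {α : Type*} [DecidableEq α]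
    (S : ℕ → Finset (List α)) (k : ℕ) (a b : α) : ℕ∞ :=
  sInf { m : ℕ∞ | ∃ ys : List (List α), ys.length = k ∧
    (∀ (t : ℕ) (ht : t < ys.length), ys.get ⟨t, ht⟩ ∈ S t) ∧
    (∃ y₁, ys.head? = some y₁ ∧ y₁.head? = some a) ∧
    (∃ yk, ys.getLast? = some yk ∧ yk.getLast? = some b) ∧
    m = (runs ys.flatten : ℕ∞) }

/-- `ρ_k(d,b)`: the infimum in `ℕ∞` of `runs y` over `y ∈ S k` starting with
`d` and ending with `b` (`⊤` if no such `y` exists). -/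
noncomputable def rhoRuns {α : Type*} [DecidableEq α]
    (S : ℕ → Finset (List α)) (k : ℕ) (d b : α) : ℕ∞ :=
  sInf { m : ℕ∞ | ∃ y ∈ S k, y.head? = some d ∧ y.getLast? = some b ∧
    m = (runs y : ℕ∞) }

lemma runs_pos {α : Type*} [DecidableEq α] (l : List α) (h : l ≠ []) : 1 ≤ runs l := by
  induction l with
  | nil => simp at h
  | cons a t ih =>
    cases t with
    | nil => simp [runs]
    | cons b t' =>
      have := ih (by simp)
      simp only [runs]
      omega

lemma runs_append {α : Type*} [DecidableEq α] (y : List α) :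
    ∀ (x : List α) (c d : α), x.getLast? = some c → y.head? = some d →
      runs (x ++ y) + (if c = d then 1 else 0) = runs x + runs y := by
  intro x
  induction x with
  | nil => intro c d hc _; simp at hc
  | cons e x' ih =>
    intro c d hc hd
    cases x' with
    | nil =>
      simp only [List.getLast?_singleton, Option.some.injEq] at hc
      subst hc
      cases y with
      | nil => simp at hd
      | cons d' y' =>
        simp only [List.head?_cons, Option.some.injEq] at hd
        subst hd
        simp only [List.singleton_append, runs]
        split_ifs <;> omega
    | cons f x'' =>
      rw [List.getLast?_cons_cons] at hc
      have h2 := ih c d hc hd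
      simp only [List.cons_append, List.append_eq, runs] at h2 ⊢
      split_ifs at h2 ⊢ <;> omega

lemma head?_flatten {α : Type*} (x : List α) (l : List (List α)) (a : α)
    (hx : x.head? = some a) : (x :: l).flatten.head? = some a := by
  cases x with
  | nil => simp at hx
  | cons e t =>
    simp only [List.head?_cons, Option.some.injEq] at hx
    subst hx
    simp

lemma getLast?_flatten {α : Type*} : ∀ (l : List (List α)) (y : List α) (b : α),
    l.getLast? = some y → y.getLast? = some b → l.flatten.getLast? = some b := by
  intro l
  induction l with
  | nil => simp
  | cons x l' ih =>
    intro y b hy hb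
    cases l' with
    | nil =>
      simp only [List.getLast?_singleton, Option.some.injEq] at hy
      subst hy
      simpa using hb
    | cons z l'' =>
      rw [List.getLast?_cons_cons] at hy
      have h2 := ih y b hy hb
      have hne : (z :: l'').flatten ≠ [] := by
        intro hcon
        rw [hcon] at h2
        simp at h2
      rw [List.flatten_cons, List.getLast?_append_of_ne_nil _ hne]
      exact h2

/-- The dynamic-programming recurrence for the minimal number of runs: for
`2 ≤ k ≤ h`, `M[k,a,b] = min_{c,d ∈ Σ} ( M[k−1,a,c] + ρ_k(d,b) − δ_{cd} )`
(sets are indexed `0, …, h−1`, so `ρ_k` is `rhoRuns S (k−1)`; subtraction is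
truncated subtraction in `ℕ∞`). -/
theorem chainRuns_recurrence {α : Type*} [Fintype α] [Nonempty α] [DecidableEq α]
    (h : ℕ) (hh : 2 ≤ h) (S : ℕ → Finset (List α))
    (hSne : ∀ j < h, (S j).Nonempty)
    (hSstr : ∀ j < h, ∀ z ∈ S j, z ≠ [])
    (k : ℕ) (hk2 : 2 ≤ k) (hkh : k ≤ h) (a b : α) :
    chainRuns S k a b =
      ⨅ (c : α), ⨅ (d : α),
        (chainRuns S (k - 1) a c + rhoRuns S (k - 1) d b
          - (if c = d then 1 else 0)) := by
  apply le_antisymm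
  · refine le_iInf fun c => le_iInf fun d => ?_
    by_cases hM : chainRuns S (k-1) a c = ⊤
    · have : chainRuns S (k-1) a c + rhoRuns S (k-1) d b
          - (if c = d then (1:ℕ∞) else 0) = ⊤ := by
        rw [hM, top_add]
        split_ifs
        · exact ENat.top_sub_one
        · exact tsub_zero _
      rw [this]; exact le_top
    by_cases hR : rhoRuns S (k-1) d b = ⊤
    · have : chainRuns S (k-1) a c + rhoRuns S (k-1) d b
          - (if c = d then (1:ℕ∞) else 0) = ⊤ := by
        rw [hR, add_top]
        split_ifs
        · exact ENat.top_sub_one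
        · exact tsub_zero _
      rw [this]; exact le_top
    -- both finite: extract minimizing witnesses
    have hne1 : { m : ℕ∞ | ∃ ys : List (List α), ys.length = k - 1 ∧
        (∀ (t : ℕ) (ht : t < ys.length), ys.get ⟨t, ht⟩ ∈ S t) ∧
        (∃ y₁, ys.head? = some y₁ ∧ y₁.head? = some a) ∧
        (∃ yk, ys.getLast? = some yk ∧ yk.getLast? = some c) ∧
        m = (runs ys.flatten : ℕ∞) }.Nonempty := by
      by_contra hcon
      rw [Set.not_nonempty_iff_eq_empty] at hcon
      apply hM
      simp only [chainRuns]
      rw [hcon, sInf_empty]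
    have hne2 : { m : ℕ∞ | ∃ y ∈ S (k-1), y.head? = some d ∧ y.getLast? = some b ∧
        m = (runs y : ℕ∞) }.Nonempty := by
      by_contra hcon
      rw [Set.not_nonempty_iff_eq_empty] at hcon
      apply hR
      simp only [rhoRuns]
      rw [hcon, sInf_empty]
    have h1 : chainRuns S (k-1) a c ∈ { m : ℕ∞ | ∃ ys : List (List α), ys.length = k - 1 ∧
        (∀ (t : ℕ) (ht : t < ys.length), ys.get ⟨t, ht⟩ ∈ S t) ∧
        (∃ y₁, ys.head? = some y₁ ∧ y₁.head? = some a) ∧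
        (∃ yk, ys.getLast? = some yk ∧ yk.getLast? = some c) ∧
        m = (runs ys.flatten : ℕ∞) } := csInf_mem hne1
    have h2 : rhoRuns S (k-1) d b ∈ { m : ℕ∞ | ∃ y ∈ S (k-1), y.head? = some d ∧
        y.getLast? = some b ∧ m = (runs y : ℕ∞) } := csInf_mem hne2
    obtain ⟨ys, hlen, hmem, ⟨y₁, hy₁, hy₁a⟩, ⟨yk, hyk, hykc⟩, hval⟩ := h1
    obtain ⟨y, hyS, hyd, hyb, hval2⟩ := h2
    have hysne : ys ≠ [] := by
      intro hcon; rw [hcon] at hlen; simp at hlen; omega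
    -- the candidate chain of length k
    have hle : chainRuns S k a b ≤ ((runs (ys ++ [y]).flatten : ℕ) : ℕ∞) := by
      apply sInf_le
      refine ⟨ys ++ [y], by simp [hlen]; omega, ?_, ?_, ⟨y, by simp, hyb⟩, rfl⟩
      · intro t ht
        simp only [List.get_eq_getElem]
        by_cases htl : t < ys.length
        · rw [List.getElem_append_left htl]
          have := hmem t htl
          simpa using this
        · have ht' : t = ys.length := by
            simp only [List.length_append, List.length_singleton] at ht
            omega
          subst ht'
          rw [List.getElem_concat_length rfl ht]
          rw [hlen]
          exact hyS
      · refine ⟨y₁, ?_, hy₁a⟩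
        cases ys with
        | nil => exact absurd rfl hysne
        | cons x t => simpa using hy₁
    refine hle.trans ?_
    rw [hval, hval2]
    have hflast : ys.flatten.getLast? = some c := getLast?_flatten ys yk c hyk hykc
    have happ := runs_append y ys.flatten c d hflast hyd
    have hfl : (ys ++ [y]).flatten = ys.flatten ++ y := by simp
    rw [hfl]
    split_ifs with hcd
    · rw [if_pos hcd] at happ
      apply ENat.le_sub_of_add_le_left (by simp)
      have : 1 + runs (ys.flatten ++ y) ≤ runs ys.flatten + runs y := by omega
      exact_mod_cast this
    · rw [if_neg hcd] at happ
      rw [tsub_zero]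
      have : runs (ys.flatten ++ y) ≤ runs ys.flatten + runs y := by omega
      exact_mod_cast this
  · refine le_sInf fun m hm => ?_
    obtain ⟨ys, hlen, hmem, ⟨y₁, hy₁, hy₁a⟩, ⟨yk, hyk, hykb⟩, rfl⟩ := hm
    have hysne : ys ≠ [] := by
      intro hcon; rw [hcon] at hlen; simp at hlen; omega
    have hall : ∀ z ∈ ys, z ≠ [] := by
      intro z hz
      obtain ⟨⟨t, ht⟩, rfl⟩ := List.mem_iff_get.mp hz
      exact hSstr t (lt_of_lt_of_le (hlen ▸ ht) hkh) _ (hmem t ht)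
    set y := ys.getLast hysne with hy
    have hyky : yk = y := by
      rw [List.getLast?_eq_getLast hysne] at hyk
      exact (Option.some_inj.mp hyk).symm
    have hyne : y ≠ [] := hall y (List.getLast_mem hysne)
    have hys'len : ys.dropLast.length = k - 1 := by
      rw [List.length_dropLast, hlen]
    have hys'ne : ys.dropLast ≠ [] := by
      intro hcon
      rw [hcon] at hys'len
      simp at hys'len
      omega
    set y' := ys.dropLast.getLast hys'ne with hy'
    have hy'ne : y' ≠ [] := hall y' ((List.dropLast_sublist ys).subset (List.getLast_mem hys'ne))
    set c := y'.getLast hy'ne with hc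
    set d := y.head hyne with hd
    have hy'c : y'.getLast? = some c := List.getLast?_eq_getLast hy'ne
    have hyd : y.head? = some d := List.head?_eq_head hyne
    have hsplit : ys.dropLast ++ [y] = ys := List.dropLast_append_getLast hysne
    -- claim A
    have hA : chainRuns S (k-1) a c ≤ ((runs ys.dropLast.flatten : ℕ) : ℕ∞) := by
      apply sInf_le
      refine ⟨ys.dropLast, hys'len, ?_, ⟨y₁, ?_, hy₁a⟩,
        ⟨y', List.getLast?_eq_getLast hys'ne, hy'c⟩, rfl⟩
      · intro t ht
        simp only [List.get_eq_getElem]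
        rw [List.getElem_dropLast]
        exact hmem t (by simp only [List.length_dropLast] at ht; omega)
      · rw [← hy₁]
        cases ys with
        | nil => exact absurd rfl hysne
        | cons x t =>
          cases t with
          | nil => simp at hlen; omega
          | cons x2 t2 => simp
    -- claim B
    have hB : rhoRuns S (k-1) d b ≤ ((runs y : ℕ) : ℕ∞) := by
      apply sInf_le
      refine ⟨y, ?_, hyd, hyky ▸ hykb, rfl⟩
      have hidx : ys.length - 1 < ys.length := by
        rw [hlen]; omega
      have : y = ys.get ⟨ys.length - 1, hidx⟩ := by
        rw [hy, List.getLast_eq_getElem]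
        simp
      rw [this, show k - 1 = ys.length - 1 by omega]
      exact hmem (ys.length - 1) hidx
    have hflast : ys.dropLast.flatten.getLast? = some c :=
      getLast?_flatten ys.dropLast y' c (List.getLast?_eq_getLast hys'ne) hy'c
    have happ := runs_append y ys.dropLast.flatten c d hflast hyd
    have hfl : ys.flatten = ys.dropLast.flatten ++ y := by
      conv_lhs => rw [← hsplit]
      simp
    calc ⨅ (c : α), ⨅ (d : α),
        (chainRuns S (k - 1) a c + rhoRuns S (k - 1) d b - (if c = d then 1 else 0))
        ≤ chainRuns S (k - 1) a c + rhoRuns S (k - 1) d b - (if c = d then 1 else 0) :=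
          iInf_le_of_le c (iInf_le _ d)
      _ ≤ ((runs ys.dropLast.flatten : ℕ) : ℕ∞) + ((runs y : ℕ) : ℕ∞)
            - (if c = d then 1 else 0) := tsub_le_tsub_right (add_le_add hA hB) _
      _ = ((runs ys.flatten : ℕ) : ℕ∞) := by
          rw [hfl]
          split_ifs with hcd
          · rw [if_pos hcd] at happ
            have h1 : ((runs ys.dropLast.flatten : ℕ) : ℕ∞) + ((runs y : ℕ) : ℕ∞)
                = ((runs (ys.dropLast.flatten ++ y) : ℕ) : ℕ∞) + 1 := by
              exact_mod_cast congrArg (Nat.cast : ℕ → ℕ∞) happ.symm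
            rw [h1]
            exact (ENat.addLECancellable_of_ne_top (by simp)).add_tsub_cancel_right
          · rw [if_neg hcd] at happ
            rw [tsub_zero]
            exact_mod_cast happ.symm
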